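/- Let K3 surface X have Pic(X) = ℤH, so the algebraic Mukai lattice is Λ = ℤ ⊕ ℤH ⊕ ℤϱ with ⟨(x₀,x₁H,x₂), (y₀,y₁H,y₂)⟩ = x₁y₁(H²) − x₀y₂ − x₂y₀. Fix a primitive isotropic w₁ = r₁e^γ (γ ∈ ℚH) and a pair (β,ω). Then there is at most one Mukai vector v with ⟨v²⟩ = −2, d_β(v) > 0, and phase condition Σ_{(β,ω)}(v, w₁) = 0 together with −r₁(c₁(v) − rk(v)γ, L) + λ⟨v, w₁⟩ = 0 (the linear phase-equality constraint); i.e. the solution of this pair of linear conditions with ⟨v²⟩ = −2 and d_β(v) > 0 is unique if it exists. -/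

import Mathlib

/-- The rational Mukai pairing of a K3 surface with `Pic = ℤH`,
in coordinates `(rank, H-coefficient of c₁, ϱ-coefficient)`, with `h = (H²)`. -/
def kpair (h : ℚ) (x y : ℚ × ℚ × ℚ) : ℚ :=
  x.2.1 * y.2.1 * h - x.1 * y.2.2 - x.2.2 * y.1

/-- `e^{cH}`. -/
def kexp (h c : ℚ) : ℚ × ℚ × ℚ := (1, c, c ^ 2 * h / 2)

/-- `d_β` for `β = bH`. -/
def kd (h b : ℚ) (v : ℚ × ℚ × ℚ) : ℚ := (v.2.1 * h - v.1 * (h * b)) / h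

/-- The stability function `Z_{(bH, tH)}`. -/
noncomputable def kZ (h b t : ℚ) (v : ℚ × ℚ × ℚ) : ℂ :=
  ((kpair h (kexp h b) v : ℚ) : ℂ)
    + ((kpair h (0, t, t * h * b) v : ℚ) : ℂ) * Complex.I
    - ((t ^ 2 * h / 2 : ℚ) : ℂ) * ((kpair h (0, 0, 1) v : ℚ) : ℂ)

/-- `Σ_{(β,ω)}`. -/
noncomputable def kSig (h b t : ℚ) (v w : ℚ × ℚ × ℚ) : ℝ :=
  (kZ h b t v).re * (kZ h b t w).im - (kZ h b t v).im * (kZ h b t w).re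

/-- The inclusion of the integral Mukai lattice. -/
def intCast3 (v : ℤ × ℤ × ℤ) : ℚ × ℚ × ℚ := ((v.1 : ℚ), (v.2.1 : ℚ), (v.2.2 : ℚ))

/-- The conditions on `v`: `⟨v²⟩ = −2`, `d_β(v) > 0`, `Σ_{(β,ω)}(v, w₁) = 0`,
and the linear phase-equality constraint
`−r₁(c₁(v) − rk(v)γ, L) + λ⟨v, w₁⟩ = 0`, where `γ = cH`, `β = bH`, `λ = c − b`,
`L = ((ω²) + λ²(H²))/(2(H²))·H` and `w₁ = r₁e^γ`. -/
def KCond (h b c t r₁ : ℚ) (v : ℤ × ℤ × ℤ) : Prop :=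
  kpair h (intCast3 v) (intCast3 v) = -2 ∧
  0 < kd h b (intCast3 v) ∧
  kSig h b t (intCast3 v) (r₁ • kexp h c) = 0 ∧
  -r₁ * (((intCast3 v).2.1 - (intCast3 v).1 * c)
      * ((t ^ 2 * h + (c - b) ^ 2 * h) / (2 * h)) * h)
    + (c - b) * kpair h (intCast3 v) (r₁ • kexp h c) = 0

-- helper lemmas
theorem kden_dvd (q : ℚ) (n m : ℤ) (h : q * n = m) : (q.den : ℤ) ∣ n := by
  have key : q.num * n = m * q.den := by
    have hq := Rat.num_div_den q
    rw [← hq] at h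
    field_simp at h
    rw [mul_comm m]; exact_mod_cast h
  have h1 : (q.den : ℤ) ∣ q.num * n := ⟨m, by linarith⟩
  have h2 : q.den ∣ (q.num.natAbs * n.natAbs) := by
    rw [← Int.natAbs_mul]
    have := Int.natAbs_dvd_natAbs.mpr h1
    simpa using this
  have h3 : q.den ∣ n.natAbs := (Nat.Coprime.dvd_of_dvd_mul_left (Nat.Coprime.symm q.reduced) h2)
  have := Int.ofNat_dvd.mpr h3
  exact (Int.dvd_natAbs).mp this

theorem kkernel (h b c t r₁ x₁ x₂ x₃ : ℚ) (hh : 0 < h) (ht : 0 < t) (hr₁ : r₁ ≠ 0)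
    (hpair : x₂ * (r₁*c) * h - x₁ * (r₁*(c^2*h/2)) - x₃ * r₁ = 0)
    (hlin : -r₁ * ((x₂ - x₁*c) * ((t^2*h + (c-b)^2*h)/(2*h)) * h)
      + (c-b) * (x₂ * (r₁*c) * h - x₁ * (r₁*(c^2*h/2)) - x₃ * r₁) = 0) :
    x₂ = x₁ * c ∧ x₃ = x₁ * (c^2*h/2) := by
  rw [hpair, mul_zero, add_zero] at hlin
  have hne : r₁ * ((t^2 + (c-b)^2) * h^2) ≠ 0 := by positivity
  have hh' : h ≠ 0 := ne_of_gt hh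
  have h1 : (x₂ - x₁*c) * (r₁ * ((t^2 + (c-b)^2) * h^2)) = 0 := by
    field_simp at hlin
    linear_combination (-h) * hlin
  have hx2 : x₂ = x₁ * c := by
    rcases mul_eq_zero.mp h1 with h' | h'
    · linarith
    · exact absurd h' hne
  refine ⟨hx2, ?_⟩
  rw [hx2] at hpair
  have h2 : (x₁ * (c^2*h/2) - x₃) * r₁ = 0 := by linear_combination hpair
  rcases mul_eq_zero.mp h2 with h' | h'
  · linarith
  · exact absurd h' hr₁

/-- On a K3 surface with `Pic = ℤH`, for a fixed primitive isotropic `w₁ = r₁e^γ`,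
there is at most one Mukai vector `v` with `⟨v²⟩ = −2`, `d_β(v) > 0` and the linear
phase-equality conditions. -/
theorem minus_two_vector_unique
    (h : ℤ) (hh : 0 < h) (heven : Even h)
    (b c t r₁ : ℚ) (ht : 0 < t) (hr₁ : r₁ ≠ 0)
    (W : ℤ × ℤ × ℤ)
    (hW : intCast3 W = r₁ • kexp (h : ℚ) c)
    (hWprim : ∀ d : ℤ, d ∣ W.1 → d ∣ W.2.1 → d ∣ W.2.2 → IsUnit d)
    (v v' : ℤ × ℤ × ℤ)
    (hv : KCond (h : ℚ) b c t r₁ v) (hv' : KCond (h : ℚ) b c t r₁ v') :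
    v = v' := by
  obtain ⟨w₁, w₂, w₃⟩ := W
  obtain ⟨a₁, a₂, a₃⟩ := v
  obtain ⟨b₁, b₂, b₃⟩ := v'
  obtain ⟨hv1, hv2, -, hv4⟩ := hv
  obtain ⟨hv'1, hv'2, -, hv'4⟩ := hv'
  simp only [kpair, kexp, kd, intCast3, Prod.smul_mk, smul_eq_mul, mul_one,
    Prod.mk.injEq] at hv1 hv2 hv4 hv'1 hv'2 hv'4 hW
  obtain ⟨hw1, hw2, hw3⟩ := hW
  simp only [Prod.mk.injEq]
  have hhQ : (0:ℚ) < (h:ℚ) := by exact_mod_cast hh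
  have hhQ' : (h:ℚ) ≠ 0 := ne_of_gt hhQ
  -- scalar forms of the linear conditions
  have hva4 : -r₁ * (((a₂:ℚ) - (a₁:ℚ)*c) * ((t^2*(h:ℚ) + (c-b)^2*(h:ℚ))/(2*(h:ℚ))) * (h:ℚ))
      + (c-b) * ((a₂:ℚ)*(r₁*c)*(h:ℚ) - (a₁:ℚ)*(r₁*(c^2*(h:ℚ)/2)) - (a₃:ℚ)*r₁) = 0 := by
    linear_combination hv4
  have hvb4 : -r₁ * (((b₂:ℚ) - (b₁:ℚ)*c) * ((t^2*(h:ℚ) + (c-b)^2*(h:ℚ))/(2*(h:ℚ))) * (h:ℚ))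
      + (c-b) * ((b₂:ℚ)*(r₁*c)*(h:ℚ) - (b₁:ℚ)*(r₁*(c^2*(h:ℚ)/2)) - (b₃:ℚ)*r₁) = 0 := by
    linear_combination hv'4
  have hva1 : (a₂:ℚ)*(a₂:ℚ)*(h:ℚ) - (a₁:ℚ)*(a₃:ℚ) - (a₃:ℚ)*(a₁:ℚ) = -2 := by
    linear_combination hv1
  have hvb1 : (b₂:ℚ)*(b₂:ℚ)*(h:ℚ) - (b₁:ℚ)*(b₃:ℚ) - (b₃:ℚ)*(b₁:ℚ) = -2 := by
    linear_combination hv'1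
  have hvvZ : a₂*a₂*h - a₁*a₃ - a₃*a₁ = -2 := by exact_mod_cast hva1
  have hv'vZ : b₂*b₂*h - b₁*b₃ - b₃*b₁ = -2 := by exact_mod_cast hvb1
  have hWWZ : w₂*w₂*h - w₁*w₃ - w₃*w₁ = 0 := by
    have : ((w₂*w₂*h - w₁*w₃ - w₃*w₁ : ℤ) : ℚ) = 0 := by
      push_cast
      rw [hw1, hw2, hw3]
      ring
    exact_mod_cast this
  -- D and D'
  set D : ℤ := a₂*w₂*h - a₁*w₃ - a₃*w₁ with hDd
  set D' : ℤ := b₂*w₂*h - b₁*w₃ - b₃*w₁ with hD'd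
  have hDne : D ≠ 0 := by
    intro hD0
    have hcast : ((D:ℤ):ℚ) = 0 := by rw [hD0]; norm_num
    rw [hDd] at hcast
    push_cast at hcast
    rw [hw1, hw2, hw3] at hcast
    have hpa : (a₂:ℚ) * (r₁*c) * (h:ℚ) - (a₁:ℚ) * (r₁*(c^2*(h:ℚ)/2)) - (a₃:ℚ) * r₁ = 0 := by
      linear_combination hcast
    obtain ⟨k2, k3⟩ := kkernel (h:ℚ) b c t r₁ (a₁:ℚ) (a₂:ℚ) (a₃:ℚ) hhQ ht hr₁ hpa hva4
    rw [k2, k3] at hva1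
    have : (0:ℚ) = -2 := by linear_combination hva1
    norm_num at this
  -- gcd and Bezout
  set G : ℕ := Int.gcd D D' with hGd
  have hGne : (G:ℤ) ≠ 0 := by
    intro h0
    have : Int.gcd D D' = 0 := by exact_mod_cast h0
    exact hDne (Int.gcd_eq_zero_iff.mp this).1
  have hGpos : 0 < (G:ℤ) := lt_of_le_of_ne (Int.ofNat_nonneg G) (Ne.symm hGne)
  have hBez := Int.gcd_eq_gcd_ab D D'
  set p : ℤ := Int.gcdA D D' with hpd
  set q : ℤ := Int.gcdB D D' with hqd
  set u₁ : ℤ := p*a₁ + q*b₁ with hu1d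
  set u₂ : ℤ := p*a₂ + q*b₂ with hu2d
  set u₃ : ℤ := p*a₃ + q*b₃ with hu3d
  have hG : u₂*w₂*h - u₁*w₃ - u₃*w₁ = (G:ℤ) := by
    rw [hu1d, hu2d, hu3d, hDd] at *
    rw [hD'd] at hBez
    linear_combination hBez.symm
  have hulin : -r₁ * (((u₂:ℚ) - (u₁:ℚ)*c) * ((t^2*(h:ℚ) + (c-b)^2*(h:ℚ))/(2*(h:ℚ))) * (h:ℚ))
      + (c-b) * ((u₂:ℚ)*(r₁*c)*(h:ℚ) - (u₁:ℚ)*(r₁*(c^2*(h:ℚ)/2)) - (u₃:ℚ)*r₁) = 0 := by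
    rw [hu1d, hu2d, hu3d]
    push_cast
    linear_combination (p:ℚ)*hva4 + (q:ℚ)*hvb4
  -- key decomposition
  have key : ∀ A₁ A₂ A₃ : ℤ,
      (-r₁ * (((A₂:ℚ) - (A₁:ℚ)*c) * ((t^2*(h:ℚ) + (c-b)^2*(h:ℚ))/(2*(h:ℚ))) * (h:ℚ))
        + (c-b) * ((A₂:ℚ)*(r₁*c)*(h:ℚ) - (A₁:ℚ)*(r₁*(c^2*(h:ℚ)/2)) - (A₃:ℚ)*r₁) = 0) →
      ((G:ℤ) ∣ (A₂*w₂*h - A₁*w₃ - A₃*w₁)) →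
      ∃ y z : ℤ, A₁ = y*u₁ + z*w₁ ∧ A₂ = y*u₂ + z*w₂ ∧ A₃ = y*u₃ + z*w₃ := by
    intro A₁ A₂ A₃ hlinA hdvdA
    obtain ⟨y, hy⟩ := hdvdA
    have hXw : (A₂ - y*u₂)*w₂*h - (A₁ - y*u₁)*w₃ - (A₃ - y*u₃)*w₁ = 0 := by
      linear_combination hy - y*hG
    have hXwQ : ((A₂ - y*u₂ : ℤ):ℚ) * (r₁*c) * (h:ℚ)
        - ((A₁ - y*u₁ : ℤ):ℚ) * (r₁*(c^2*(h:ℚ)/2)) - ((A₃ - y*u₃ : ℤ):ℚ) * r₁ = 0 := by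
      have hc := congrArg (fun n : ℤ => (n:ℚ)) hXw
      push_cast at hc
      rw [hw1, hw2, hw3] at hc
      push_cast
      linear_combination hc
    have hXlin : -r₁ * ((((A₂ - y*u₂ : ℤ):ℚ) - ((A₁ - y*u₁ : ℤ):ℚ)*c)
          * ((t^2*(h:ℚ) + (c-b)^2*(h:ℚ))/(2*(h:ℚ))) * (h:ℚ))
        + (c-b) * (((A₂ - y*u₂ : ℤ):ℚ)*(r₁*c)*(h:ℚ)
          - ((A₁ - y*u₁ : ℤ):ℚ)*(r₁*(c^2*(h:ℚ)/2)) - ((A₃ - y*u₃ : ℤ):ℚ)*r₁) = 0 := by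
      push_cast
      linear_combination hlinA - (y:ℚ)*hulin
    obtain ⟨k2, k3⟩ := kkernel (h:ℚ) b c t r₁ _ _ _ hhQ ht hr₁ hXwQ hXlin
    set q₀ : ℚ := ((A₁ - y*u₁ : ℤ):ℚ)/r₁ with hq₀d
    have hq1 : q₀ * (w₁:ℚ) = ((A₁ - y*u₁ : ℤ):ℚ) := by rw [hw1, hq₀d]; field_simp
    have hq2 : q₀ * (w₂:ℚ) = ((A₂ - y*u₂ : ℤ):ℚ) := by
      rw [hw2, hq₀d, k2]; field_simp
    have hq3 : q₀ * (w₃:ℚ) = ((A₃ - y*u₃ : ℤ):ℚ) := by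
      rw [hw3, hq₀d, k3]; field_simp
    have hd1 := kden_dvd q₀ w₁ _ hq1
    have hd2 := kden_dvd q₀ w₂ _ hq2
    have hd3 := kden_dvd q₀ w₃ _ hq3
    have hunit := hWprim _ hd1 hd2 hd3
    have hden1 : q₀.den = 1 := by
      rcases Int.isUnit_iff.mp hunit with h' | h'
      · exact_mod_cast h'
      · have := q₀.pos
        omega
    have hq0z : ((q₀.num:ℤ):ℚ) = q₀ := by
      conv_rhs => rw [← Rat.num_div_den q₀]
      rw [hden1]
      norm_num
    refine ⟨y, q₀.num, ?_, ?_, ?_⟩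
    · have er : ((A₁ - y*u₁ : ℤ):ℚ) = ((q₀.num * w₁ : ℤ):ℚ) := by
        push_cast
        rw [hq0z]
        exact_mod_cast hq1.symm
      have eZ : A₁ - y*u₁ = q₀.num * w₁ := by exact_mod_cast er
      linarith
    · have er : ((A₂ - y*u₂ : ℤ):ℚ) = ((q₀.num * w₂ : ℤ):ℚ) := by
        push_cast
        rw [hq0z]
        exact_mod_cast hq2.symm
      have eZ : A₂ - y*u₂ = q₀.num * w₂ := by exact_mod_cast er
      linarith
    · have er : ((A₃ - y*u₃ : ℤ):ℚ) = ((q₀.num * w₃ : ℤ):ℚ) := by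
        push_cast
        rw [hq0z]
        exact_mod_cast hq3.symm
      have eZ : A₃ - y*u₃ = q₀.num * w₃ := by exact_mod_cast er
      linarith
  -- apply key to v and v'
  obtain ⟨y, z, ea1, ea2, ea3⟩ := key a₁ a₂ a₃ hva4 (hDd ▸ Int.gcd_dvd_left D D')
  obtain ⟨y', z', eb1, eb2, eb3⟩ := key b₁ b₂ b₃ hvb4 (hD'd ▸ Int.gcd_dvd_right D D')
  -- evenness forces y, y' = ±1
  obtain ⟨h₀, hh₀⟩ := heven
  have yunit : ∀ (Y Z : ℤ) (B₁ B₂ B₃ : ℤ), B₁ = Y*u₁ + Z*w₁ → B₂ = Y*u₂ + Z*w₂ →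
      B₃ = Y*u₃ + Z*w₃ → B₂*B₂*h - B₁*B₃ - B₃*B₁ = -2 → Y = 1 ∨ Y = -1 := by
    intro Y Z B₁ B₂ B₃ e1 e2 e3 hB
    rw [e1, e2, e3] at hB
    have h2 : 2*(Y*(Y*(u₂*u₂*h₀ - u₁*u₃) + Z*(G:ℤ))) = 2*(-1) := by
      linear_combination hB - 2*Y*Z*hG - Z^2*hWWZ - Y^2*u₂*u₂*hh₀
    have h3 : Y*(Y*(u₂*u₂*h₀ - u₁*u₃) + Z*(G:ℤ)) = -1 :=
      mul_left_cancel₀ (two_ne_zero) h2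
    have : IsUnit Y := IsUnit.of_mul_eq_one (a := Y) (-(Y*(u₂*u₂*h₀ - u₁*u₃) + Z*(G:ℤ)))
      (by linear_combination -h3)
    exact Int.isUnit_iff.mp this
  have hyv := yunit y z a₁ a₂ a₃ ea1 ea2 ea3 hvvZ
  have hyv' := yunit y' z' b₁ b₂ b₃ eb1 eb2 eb3 hv'vZ
  have hcases : y' = y ∨ y' = -y := by
    rcases hyv with h1 | h1 <;> rcases hyv' with h2 | h2 <;> omega
  have hyne : y ≠ 0 := by rcases hyv with h1 | h1 <;> omega
  rcases hcases with hyy | hyy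
  · -- same sign : v = v'
    rw [hyy] at eb1 eb2 eb3
    have t1 := hvvZ; rw [ea1, ea2, ea3] at t1
    have t2 := hv'vZ; rw [eb1, eb2, eb3] at t2
    have hz : (z' - z)*(y*(G:ℤ))*2 = 0 := by
      linear_combination t2 - t1 - 2*y*(z'-z)*hG - (z'^2 - z^2)*hWWZ
    have hzz : z' = z := by
      have hyG : y*(G:ℤ) ≠ 0 := mul_ne_zero hyne hGne
      rcases mul_eq_zero.mp hz with h' | h'
      · rcases mul_eq_zero.mp h' with h'' | h''
        · omega
        · exact absurd h'' hyG
      · omega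
    rw [hzz] at eb1 eb2 eb3
    refine ⟨by omega, by omega, by omega⟩
  · -- opposite sign : v' = -v, contradiction with d_β > 0
    rw [hyy] at eb1 eb2 eb3
    have t1 := hvvZ; rw [ea1, ea2, ea3] at t1
    have t2 := hv'vZ; rw [eb1, eb2, eb3] at t2
    have hz : (z' + z)*(y*(G:ℤ))*2 = 0 := by
      linear_combination t1 - t2 - 2*y*(z'+z)*hG + (z'^2 - z^2)*hWWZ
    have hzz : z' = -z := by
      have hyG : y*(G:ℤ) ≠ 0 := mul_ne_zero hyne hGne
      rcases mul_eq_zero.mp hz with h' | h'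
      · rcases mul_eq_zero.mp h' with h'' | h''
        · omega
        · exact absurd h'' hyG
      · omega
    rw [hzz] at eb1 eb2 eb3
    have hb1 : b₁ = -a₁ := by linear_combination eb1 + ea1
    have hb2 : b₂ = -a₂ := by linear_combination eb2 + ea2
    have hb2' : (b₂:ℚ) = -(a₂:ℚ) := by exact_mod_cast congrArg (fun n : ℤ => (n:ℚ)) hb2
    have hb1' : (b₁:ℚ) = -(a₁:ℚ)  := by exact_mod_cast congrArg (fun n : ℤ => (n:ℚ)) hb1
    rw [hb1', hb2'] at hv'2
    have hneg : (-(a₂:ℚ)*(h:ℚ) - -(a₁:ℚ)*((h:ℚ)*b))/(h:ℚ)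
        = -(((a₂:ℚ)*(h:ℚ) - (a₁:ℚ)*((h:ℚ)*b))/(h:ℚ)) := by ring
    rw [hneg] at hv'2
    linarith
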